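/- Define operators P_j(K, θ_K) by P_1 = θ_K and the recursion P_{j+1} = θ_K∘P_j - j·((1+2K)/(6(1-K)))·P_j. Write P_j = Σ_{r=1}^j p_{jr}(K) θ_K^r with p_{jr} ∈ C(K). Then each p_{jr}(K) = f_{jr}(K)/(1-K)^{ρ(j,r)} where ρ(j,r) = min(j-r, ⌊j/2⌋) and f_{jr}(K) is a polynomial of degree at most ρ(j,r). -/

import Mathlib

/-- The inclusion of polynomials into rational functions. -/
noncomputable def polyC : Polynomial ℂ → RatFunc ℂ := algebraMap (Polynomial ℂ) (RatFunc ℂ)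

/-- The derivative of a rational function, via the quotient rule. -/
noncomputable def rfDeriv (f : RatFunc ℂ) : RatFunc ℂ :=
  polyC f.num.derivative / polyC f.denom
    - polyC f.num * polyC f.denom.derivative / polyC f.denom ^ 2

/-- `θ_K = K d/dK` on rational functions of `K`. -/
noncomputable def thetaK (f : RatFunc ℂ) : RatFunc ℂ := RatFunc.X * rfDeriv f

/-- The rational function `(1 + 2K)/(6(1 - K))`. -/
noncomputable def wK : RatFunc ℂ := (1 + 2 * RatFunc.X) / (6 * (1 - RatFunc.X))

/-- The coefficients `p_{jr}(K)` of `P_j(K, θ_K) = ∑_{r=1}^j p_{jr}(K) θ_K^r`, determined by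
the recursion `P_1 = θ_K`, `P_{j+1} = θ_K ∘ P_j − j((1+2K)/(6(1−K))) P_j`, i.e.
`p_{(j+1)r} = θ_K(p_{jr}) − j((1+2K)/(6(1−K))) p_{jr} + p_{j(r−1)}`. -/
noncomputable def pcoef : ℕ → ℕ → RatFunc ℂ
  | 0, _ => 0
  | 1, r => if r = 1 then 1 else 0
  | (j+2), r =>
      thetaK (pcoef (j+1) r) - (((j+1 : ℕ) : RatFunc ℂ)) * wK * pcoef (j+1) r
        + pcoef (j+1) (r-1)

lemma polyC_inj : Function.Injective polyC := IsFractionRing.injective (Polynomial ℂ) (RatFunc ℂ)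

lemma polyC_ne_zero {p : Polynomial ℂ} (h : p ≠ 0) : polyC p ≠ 0 := by
  intro hh; rw [show (0 : RatFunc ℂ) = polyC 0 from (map_zero _).symm] at hh
  exact h (polyC_inj hh)

@[simp] lemma polyC_mul (a b : Polynomial ℂ) : polyC (a*b) = polyC a * polyC b := map_mul _ _ _
@[simp] lemma polyC_add (a b : Polynomial ℂ) : polyC (a+b) = polyC a + polyC b := map_add _ _ _
@[simp] lemma polyC_sub (a b : Polynomial ℂ) : polyC (a-b) = polyC a - polyC b := map_sub _ _ _
@[simp] lemma polyC_one : polyC 1 = 1 := map_one _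
@[simp] lemma polyC_zero : polyC 0 = 0 := map_zero _
@[simp] lemma polyC_pow (a : Polynomial ℂ) (n : ℕ) : polyC (a^n) = polyC a ^ n := map_pow _ _ _
@[simp] lemma polyC_X : polyC Polynomial.X = RatFunc.X := RatFunc.algebraMap_X

open Polynomial in
lemma oneX_ne : (1 - X : Polynomial ℂ) ≠ 0 := by
  intro h
  have := congrArg (fun p => Polynomial.coeff p 1) h
  simp [Polynomial.coeff_one] at this

lemma rfDeriv_div (p q : Polynomial ℂ) (hq : q ≠ 0) :
    rfDeriv (polyC p / polyC q)
      = (polyC p.derivative * polyC q - polyC p * polyC q.derivative) / polyC q ^ 2 := by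
  set f := polyC p / polyC q with hf
  clear_value f
  have hD : polyC f.denom ≠ 0 := polyC_ne_zero (RatFunc.denom_ne_zero f)
  have hQ : polyC q ≠ 0 := polyC_ne_zero hq
  have h1 : polyC f.num * polyC q = polyC p * polyC f.denom := by
    have h : polyC f.num / polyC f.denom = polyC p / polyC q := by
      rw [← hf]; exact RatFunc.num_div_denom f
    rwa [div_eq_div_iff hD hQ] at h
  have h1' : f.num * q = p * f.denom := polyC_inj (by simpa using h1)
  have h2' : polyC f.num.derivative * polyC q + polyC f.num * polyC q.derivative
      = polyC p.derivative * polyC f.denom + polyC p * polyC f.denom.derivative := by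
    have := congrArg polyC (congrArg Polynomial.derivative h1')
    simpa [Polynomial.derivative_mul] using this
  rw [rfDeriv]
  rw [div_sub_div _ _ hD (pow_ne_zero 2 hD),
    div_eq_div_iff (by exact mul_ne_zero hD (pow_ne_zero 2 hD)) (pow_ne_zero 2 hQ)]
  linear_combination (polyC f.denom ^ 2 * polyC q) * h2'
    - (polyC f.denom * (polyC f.denom.derivative * polyC q + polyC f.denom * polyC q.derivative)) * h1

open Polynomial in
lemma theta_sub_w (j : ℕ) (f : Polynomial ℂ) (m : ℕ) :
    thetaK (polyC f / polyC ((1-X)^m)) - (j : RatFunc ℂ) * wK * (polyC f / polyC ((1-X)^m))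
    = polyC (X * f.derivative * (1-X) + C (m:ℂ) * X * f
        - C ((j:ℂ)/6) * (1+2*X) * f) / polyC ((1-X)^(m+1)) := by
  have hu : (1 : RatFunc ℂ) - RatFunc.X ≠ 0 := by
    have : polyC (1 - X) ≠ 0 := polyC_ne_zero oneX_ne
    simpa [polyC, map_sub, RatFunc.algebraMap_X] using this
  have h6 : (6 : RatFunc ℂ) ≠ 0 := by
    have : polyC (6 : Polynomial ℂ) ≠ 0 := polyC_ne_zero (by norm_num)
    simpa [polyC, map_ofNat] using this
  rw [thetaK, rfDeriv_div _ _ (pow_ne_zero _ oneX_ne), wK]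
  cases m with
  | zero =>
    simp only [polyC, pow_zero, map_one, derivative_one, pow_one, map_sub, map_add, map_mul,
      map_pow, map_natCast, RatFunc.algebraMap_X, RatFunc.algebraMap_C, map_div₀, map_ofNat,
      zero_add, mul_zero, mul_one, sub_zero, map_zero]
    field_simp
    ring
  | succ k =>
    rw [derivative_pow, derivative_sub, derivative_one, derivative_X]
    simp only [polyC, Nat.add_sub_cancel, map_sub, map_add, map_mul, map_pow, map_natCast,
      map_one, map_neg, RatFunc.algebraMap_X, RatFunc.algebraMap_C, map_div₀, map_ofNat,
      zero_sub, mul_neg, mul_one]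
    have hpow : ((1:RatFunc ℂ) - RatFunc.X) ^ (k+1) ≠ 0 := pow_ne_zero _ hu
    field_simp
    ring

open Polynomial in
lemma add_div_pow (a b : Polynomial ℂ) {s t : ℕ} (h : t ≤ s) :
    polyC a / polyC ((1-X)^s) + polyC b / polyC ((1-X)^t)
    = polyC (a + b * (1-X)^(s-t)) / polyC ((1-X)^s) := by
  have hsplit : (1-X:Polynomial ℂ)^s = (1-X)^t * (1-X)^(s-t) := by
    rw [← pow_add]; congr 1; omega
  have hne : polyC ((1-X:Polynomial ℂ)^(s-t)) ≠ 0 := polyC_ne_zero (pow_ne_zero _ oneX_ne)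
  rw [polyC_add, polyC_mul, hsplit, polyC_mul]
  rw [add_div, mul_div_mul_right _ _ hne]

open Polynomial in
lemma reduce_div_pow (h : Polynomial ℂ) (m : ℕ) :
    polyC ((1-X) * h) / polyC ((1-X)^(m+1)) = polyC h / polyC ((1-X)^m) := by
  have hne : polyC (1-X:Polynomial ℂ) ≠ 0 := polyC_ne_zero oneX_ne
  rw [polyC_mul, pow_succ, polyC_mul, mul_comm (polyC ((1-X:Polynomial ℂ)^m))]
  exact mul_div_mul_left _ _ hne

open Polynomial in
lemma cancel_poly (f : Polynomial ℂ) (m : ℕ) :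
    X * f.derivative * (1-X) + C (m:ℂ) * X * f - C (((2*m:ℕ):ℂ)/6) * (1+2*X) * f
    = (1-X) * (X * f.derivative - C ((m:ℂ)/3) * f) := by
  have h1 : (((2*m:ℕ):ℂ)/6) = (m:ℂ)/3 := by push_cast; ring
  have h2 : (C (m:ℂ) : Polynomial ℂ) = 3 * C ((m:ℂ)/3) := by
    rw [show (3 : Polynomial ℂ) = C 3 from (map_ofNat C 3).symm, ← map_mul]
    congr 1; field_simp
  rw [h1, h2]; ring

@[simp] lemma thetaK_zero : thetaK 0 = 0 := by
  simp [thetaK, rfDeriv]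

lemma pcoef_zero_right : ∀ j, pcoef j 0 = 0 := by
  intro j
  induction j using Nat.strong_induction_on with
  | _ j ih =>
    match j with
    | 0 => simp [pcoef]
    | 1 => simp [pcoef]
    | (j+2) =>
      have h1 := ih (j+1) (by omega)
      simp [pcoef, h1]

lemma pcoef_eq_zero : ∀ j r, j < r → pcoef j r = 0 := by
  intro j
  induction j using Nat.strong_induction_on with
  | _ j ih =>
    match j with
    | 0 => intro r _; simp [pcoef]
    | 1 => intro r hr; simp [pcoef]; omega
    | (j+2) =>
      intro r hr
      have h1 := ih (j+1) (by omega) r (by omega)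
      have h2 := ih (j+1) (by omega) (r-1) (by omega)
      simp [pcoef, h1, h2]

open Polynomial in
lemma natDegree_oneX_pow_le (k : ℕ) : ((1-X:Polynomial ℂ)^k).natDegree ≤ k := by
  calc ((1-X:Polynomial ℂ)^k).natDegree ≤ k * (1-X:Polynomial ℂ).natDegree :=
        natDegree_pow_le
    _ ≤ k * 1 := by
        refine Nat.mul_le_mul_left _ ?_
        refine le_trans (natDegree_sub_le _ _) ?_
        simp
    _ = k := by ring

open Polynomial in
lemma natDegree_deriv_term (f : Polynomial ℂ) {m : ℕ} (hf : f.natDegree ≤ m) :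
    (X * f.derivative).natDegree ≤ m := by
  cases m with
  | zero =>
    have : f = C (f.coeff 0) := Polynomial.eq_C_of_natDegree_le_zero hf
    rw [this]; simp
  | succ k =>
    refine le_trans (natDegree_mul_le) ?_
    have h1 : f.derivative.natDegree ≤ k := le_trans (natDegree_derivative_le f) (by omega)
    simp only [natDegree_X]
    omega

open Polynomial in
lemma deg_g (j : ℕ) (f : Polynomial ℂ) {m : ℕ} (hf : f.natDegree ≤ m) :
    (X * f.derivative * (1-X) + C (m:ℂ) * X * f
      - C ((j:ℂ)/6) * (1+2*X) * f).natDegree ≤ m+1 := by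
  have hd : (X * f.derivative).natDegree ≤ m := natDegree_deriv_term f hf
  have h1X : (1-X:Polynomial ℂ).natDegree ≤ 1 := le_trans (natDegree_sub_le _ _) (by simp)
  have h12 : ((1:Polynomial ℂ)+2*X).natDegree ≤ 1 :=
    le_trans (natDegree_add_le _ _)
      (max_le (by simp) (le_trans natDegree_mul_le (by simp)))
  have hA : (X * f.derivative * (1-X)).natDegree ≤ m+1 :=
    le_trans natDegree_mul_le (by omega)
  have hB : (C (m:ℂ) * X * f).natDegree ≤ m+1 := by
    refine le_trans natDegree_mul_le ?_
    have := natDegree_mul_le (p := (C (m:ℂ) : Polynomial ℂ)) (q := X)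
    simp only [natDegree_C, natDegree_X] at this
    omega
  have hC : (C ((j:ℂ)/6) * (1+2*X) * f).natDegree ≤ m+1 := by
    refine le_trans natDegree_mul_le ?_
    have := natDegree_mul_le (p := (C ((j:ℂ)/6) : Polynomial ℂ)) (q := (1+2*X))
    simp only [natDegree_C] at this
    omega
  exact le_trans (natDegree_sub_le _ _)
    (max_le (le_trans (natDegree_add_le _ _) (max_le hA hB)) hC)

open Polynomial in
lemma deg_h (f : Polynomial ℂ) {m : ℕ} (hf : f.natDegree ≤ m) :
    (X * f.derivative - C ((m:ℂ)/3) * f).natDegree ≤ m := by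
  refine le_trans (natDegree_sub_le _ _) (max_le (natDegree_deriv_term f hf) ?_)
  refine le_trans natDegree_mul_le ?_
  simpa using hf


open Polynomial in
/-- Each `p_{jr}(K) = f_{jr}(K)/(1−K)^{ρ(j,r)}` with `ρ(j,r) = min(j−r, ⌊j/2⌋)` and
`f_{jr}` a polynomial of degree at most `ρ(j,r)`. -/
theorem pcoef_pole_order :
    ∀ j r : ℕ, 1 ≤ r → r ≤ j →
      ∃ f : Polynomial ℂ, f.natDegree ≤ min (j - r) (j / 2) ∧
        pcoef j r = polyC f / polyC ((1 - Polynomial.X) ^ min (j - r) (j / 2)) := by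
  intro j
  induction j with
  | zero => intro r h1 h2; omega
  | succ n ih =>
    intro r h1 h2
    match n, ih with
    | 0, ih =>
      -- j = 1, r = 1
      have : r = 1 := by omega
      subst this
      refine ⟨1, by simp, ?_⟩
      simp [pcoef]
    | (n'+1), ih =>
      -- j = n'+2, previous index jj = n'+1
      set jj := n'+1 with hjj
      by_cases hr : r = jj + 1
      · -- top coefficient
        subst hr
        obtain ⟨f, hdeg, heq⟩ := ih jj (by omega) (le_refl _)
        have hz : pcoef jj (jj+1) = 0 := pcoef_eq_zero _ _ (by omega)
        have hmin : min (jj - jj) (jj/2) = 0 := by omega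
        rw [hmin] at hdeg heq
        refine ⟨f, ?_, ?_⟩
        · simpa using hdeg
        · show pcoef (n'+2) (n'+2) = _
          rw [pcoef]
          simp only [show n'+2-1 = jj+1-1 from rfl, Nat.add_sub_cancel]
          rw [show n'+1 = jj from rfl, hz, heq]
          simp
      · -- r ≤ jj
        have hrle : r ≤ jj := by omega
        obtain ⟨f, hdeg, heq⟩ := ih r h1 hrle
        set m := min (jj - r) (jj/2) with hm
        set M := min ((jj+1) - r) ((jj+1)/2) with hM
        have hMm : M = m + 1 ∨ (M = m ∧ jj = 2*m) := by omega
        obtain ⟨f₂, m₂, hm₂le, hdeg₂, heq₂⟩ :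
            ∃ f₂ m₂, m₂ ≤ M ∧ f₂.natDegree ≤ m₂ ∧
              pcoef jj (r-1) = polyC f₂ / polyC ((1-X)^m₂) := by
          rcases eq_or_lt_of_le h1 with h | h
          · exact ⟨0, 0, Nat.zero_le _, by simp, by
              rw [← h]; simp [pcoef_zero_right]⟩
          · obtain ⟨f₂, hdeg₂, heq₂⟩ := ih (r-1) (by omega) (by omega)
            exact ⟨f₂, _, by omega, hdeg₂, heq₂⟩
        have hstep : pcoef (n'+2) r
            = thetaK (pcoef jj r) - ((jj : ℕ) : RatFunc ℂ) * wK * pcoef jj r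
              + pcoef jj (r-1) := by
          rw [pcoef]
        rw [heq] at hstep
        rw [theta_sub_w jj f m] at hstep
        rcases hMm with hM1 | ⟨hM1, hj2⟩
        · -- no cancellation
          refine ⟨X * f.derivative * (1-X) + C (m:ℂ) * X * f - C ((jj:ℂ)/6) * (1+2*X) * f
              + f₂ * (1-X)^(M - m₂), ?_, ?_⟩
          · refine le_trans (natDegree_add_le _ _) (max_le ?_ ?_)
            · rw [hM1]; exact deg_g jj f hdeg
            · refine le_trans natDegree_mul_le ?_
              have := natDegree_oneX_pow_le (M - m₂)
              omega
          · rw [hstep, heq₂, ← hM1, add_div_pow _ _ hm₂le]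
        · -- cancellation: jj = 2m
          have hrw : (C ((jj:ℂ)/6) : Polynomial ℂ) = C (((2*m:ℕ):ℂ)/6) := by
            rw [hj2]
          refine ⟨X * f.derivative - C ((m:ℂ)/3) * f + f₂ * (1-X)^(M - m₂), ?_, ?_⟩
          · refine le_trans (natDegree_add_le _ _) (max_le ?_ ?_)
            · rw [hM1]; exact deg_h f hdeg
            · refine le_trans natDegree_mul_le ?_
              have := natDegree_oneX_pow_le (M - m₂)
              omega
          · rw [hstep, heq₂, hrw, cancel_poly f m, reduce_div_pow, ← hM1,
              add_div_pow _ _ hm₂le]
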